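/- arXiv:2111.08586 — 2 statements merged into one kernel-verified Lean document; each statement's English description precedes it below -/
import Mathlib

section
/- Let B ∈ 𝕊_D and let 𝔼_B ⊆ V_D be the span of {e_I : I ∈ B}. If J is an interval contained in [1,D] with e_J ∈ 𝔼_B, then J ∈ B. -/
open Finset

abbrev Vec := ℕ →₀ ZMod 2

/-- The basis vector `e_i`. -/
noncomputable def e (i : ℕ) : Vec := Finsupp.single i 1

/-- For an interval `p = (a,b)` (representing `[a,b]`), the vector `e_I = ∑_{i∈[a,b]} e_i`. -/
noncomputable def eI (p : ℕ × ℕ) : Vec := ∑ j ∈ Finset.Icc p.1 p.2, e j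

/-- The map `ξ_i` on intervals. -/
def tint (i : ℕ) (p : ℕ × ℕ) : ℕ × ℕ :=
  if i ≤ p.1 then (p.1 + 2, p.2 + 2)
  else if p.2 + 2 ≤ i then p
  else (p.1, p.2 + 2)

/-- The map `t_i` on sets of intervals: `t_i(B') = ξ_i(B') ∪ {[i,i]}`. -/
def tmap (i : ℕ) (B : Finset (ℕ × ℕ)) : Finset (ℕ × ℕ) :=
  B.image (tint i) ∪ {(i, i)}

/-- The inductively defined family `S_D`. -/
inductive IsS : ℕ → Finset (ℕ × ℕ) → Prop
  | empty (D : ℕ) : IsS D ∅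
  | one : IsS 1 {(1, 1)}
  | step (D i : ℕ) (B' : Finset (ℕ × ℕ)) (h1 : 1 ≤ i) (h2 : i ≤ D + 2)
      (h : IsS D B') : IsS (D + 2) (tmap i B')

def primEven (D k : ℕ) : Finset (ℕ × ℕ) := (Finset.Icc 1 k).image fun j => (j, D + 1 - j)
def primOddA (D k : ℕ) : Finset (ℕ × ℕ) := (Finset.Icc 1 k).image fun j => (j, D - j)
def primOddB (D k : ℕ) : Finset (ℕ × ℕ) := (Finset.Icc 1 k).image fun j => (j + 1, D + 1 - j)

/-- The primitive elements of `𝕊_D`. -/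
def IsPrim (D : ℕ) (B : Finset (ℕ × ℕ)) : Prop :=
  B = ∅ ∨
  (Even D ∧ ∃ k, 1 ≤ k ∧ k ≤ D / 2 ∧ B = primEven D k) ∨
  (Odd D ∧ ∃ k, Odd k ∧ 1 ≤ k ∧ k ≤ (D - 1) / 2 ∧ (B = primOddA D k ∨ B = primOddB D k))

/-- The inductively defined family `𝕊_D`. -/
inductive IsSS : ℕ → Finset (ℕ × ℕ) → Prop
  | prim (D : ℕ) (B : Finset (ℕ × ℕ)) : IsPrim D B → IsSS D B
  | one : IsSS 1 {(1, 1)}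
  | step (D i : ℕ) (B' : Finset (ℕ × ℕ)) (h1 : 1 ≤ i) (h2 : i ≤ D + 2)
      (h : IsSS D B') : IsSS (D + 2) (tmap i B')

/-- The subspace `𝔼_B` spanned by the `e_I`, `I ∈ B`. -/
noncomputable def EB (B : Finset (ℕ × ℕ)) : Submodule (ZMod 2) Vec :=
  Submodule.span (ZMod 2) (eI '' (B : Set (ℕ × ℕ)))

/-- Two intervals are non-touching. -/
def Nontouch (p q : ℕ × ℕ) : Prop := p.2 + 2 ≤ q.1 ∨ q.2 + 2 ≤ p.1

/-- `p ≺ q`: `p = [a,b]` is strictly nested inside `q = [a',b']`, i.e. `a' < a ≤ b < b'`. -/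
def Nested (p q : ℕ × ℕ) : Prop := q.1 < p.1 ∧ p.1 ≤ p.2 ∧ p.2 < q.2

/-- `η_D = e_1 + e_3 + ⋯ + e_D` (`D` odd). -/
noncomputable def eta (D : ℕ) : Vec := ∑ j ∈ (Finset.Icc 1 D).filter (fun j => j % 2 = 1), e j

noncomputable def Tfun (i k : ℕ) : Vec :=
  if k + 1 < i then e k
  else if k + 1 = i then e k + e (k + 1) + e (k + 2)
  else e (k + 2)

/-- The linear map `T_i : V_{D-2} → V_D`. -/
noncomputable def Tlin (i : ℕ) : Vec →ₗ[ZMod 2] Vec :=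
  Finsupp.linearCombination (ZMod 2) (Tfun i)

/-- The inductively defined family `𝒻(V_D)` of subspaces. -/
inductive IsF : ℕ → Submodule (ZMod 2) Vec → Prop
  | zero (D : ℕ) : IsF D ⊥
  | one : IsF 1 (Submodule.span (ZMod 2) {e 1})
  | step (D i : ℕ) (E' : Submodule (ZMod 2) Vec) (h1 : 1 ≤ i) (h2 : i ≤ D + 2)
      (h : IsF D E') :
      IsF (D + 2) (Submodule.map (Tlin i) E' ⊔ Submodule.span (ZMod 2) {e i})

/-- The subspace `V_D = ⟨e_1,…,e_D⟩`. -/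
noncomputable def VD (D : ℕ) : Submodule (ZMod 2) Vec :=
  Submodule.span (ZMod 2) (e '' Set.Icc 1 D)

/-- The symplectic form with `(e_i,e_j) = 1` iff `|i-j| = 1`. -/
noncomputable def symp (x y : Vec) : ZMod 2 :=
  x.sum fun i xi => xi * (y (i + 1) + if 1 ≤ i then y (i - 1) else 0)


lemma tint_fst (i : ℕ) (p : ℕ × ℕ) (hp : p.1 ≤ p.2) :
    (tint i p).1 = if i ≤ p.1 then p.1 + 2 else p.1 := by
  obtain ⟨x, y⟩ := p
  simp only [tint]
  split_ifs <;> simp_all <;> omega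

lemma tint_snd (i : ℕ) (p : ℕ × ℕ) (hp : p.1 ≤ p.2) :
    (tint i p).2 = if i ≤ p.2 + 1 then p.2 + 2 else p.2 := by
  obtain ⟨x, y⟩ := p
  simp only [tint]
  split_ifs <;> simp_all <;> omega

def GoodRel (p q : ℕ × ℕ) : Prop := p = q ∨ Nontouch p q ∨ Nested p q ∨ Nested q p

def Good (B : Finset (ℕ × ℕ)) : Prop :=
  (∀ p ∈ B, 1 ≤ p.1 ∧ p.1 ≤ p.2) ∧ ∀ p ∈ B, ∀ q ∈ B, GoodRel p q

lemma tint_valid (i : ℕ) (p : ℕ × ℕ) (h1 : 1 ≤ p.1) (h2 : p.1 ≤ p.2) :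
    1 ≤ (tint i p).1 ∧ (tint i p).1 ≤ (tint i p).2 := by
  rw [tint_fst i p h2, tint_snd i p h2]
  split_ifs <;> omega

lemma tint_rel (i : ℕ) (p q : ℕ × ℕ) (hp : p.1 ≤ p.2) (hq : q.1 ≤ q.2)
    (h : GoodRel p q) : GoodRel (tint i p) (tint i q) := by
  rcases h with rfl | h | h | h
  · exact Or.inl rfl
  all_goals
    right
    simp only [Nontouch, Nested, Prod.ext_iff, tint_fst i p hp, tint_fst i q hq,
      tint_snd i p hp, tint_snd i q hq] at h ⊢
    split_ifs <;> omega

lemma tint_ii (i : ℕ) (p : ℕ × ℕ) (h1 : 1 ≤ i) (hp : p.1 ≤ p.2) :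
    GoodRel (i, i) (tint i p) := by
  right
  simp only [Nontouch, Nested, tint_fst i p hp, tint_snd i p hp]
  split_ifs <;> simp <;> omega

lemma mem_tmap {i : ℕ} {B : Finset (ℕ × ℕ)} {p : ℕ × ℕ} :
    p ∈ tmap i B ↔ (∃ q ∈ B, tint i q = p) ∨ p = (i, i) := by
  simp [tmap, Finset.mem_union, Finset.mem_image]
  exact or_comm

lemma goodRel_symm {p q : ℕ × ℕ} (h : GoodRel p q) : GoodRel q p := by
  unfold GoodRel Nontouch Nested at *
  tauto

lemma good_of_isSS {D : ℕ} {B : Finset (ℕ × ℕ)} (hB : IsSS D B) : Good B := by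
  induction hB with
  | prim D B hP =>
    rcases hP with rfl | ⟨hD, k, hk1, hk2, rfl⟩ | ⟨hD, k, hko, hk1, hk2, hBeq⟩
    · exact ⟨by simp, by simp⟩
    · obtain ⟨m, hm⟩ := hD
      constructor
      · intro p hp
        simp only [primEven, Finset.mem_image, Finset.mem_Icc] at hp
        obtain ⟨j, hj, rfl⟩ := hp
        simp only
        omega
      · intro p hp q hq
        simp only [primEven, Finset.mem_image, Finset.mem_Icc] at hp hq
        obtain ⟨j, hj, rfl⟩ := hp
        obtain ⟨j', hj', rfl⟩ := hq
        simp only [GoodRel, Nontouch, Nested, Prod.ext_iff]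
        omega
    · obtain ⟨m, hm⟩ := hD
      rcases hBeq with rfl | rfl
      · constructor
        · intro p hp
          simp only [primOddA, Finset.mem_image, Finset.mem_Icc] at hp
          obtain ⟨j, hj, rfl⟩ := hp
          simp only
          omega
        · intro p hp q hq
          simp only [primOddA, Finset.mem_image, Finset.mem_Icc] at hp hq
          obtain ⟨j, hj, rfl⟩ := hp
          obtain ⟨j', hj', rfl⟩ := hq
          simp only [GoodRel, Nontouch, Nested, Prod.ext_iff]
          omega
      · constructor
        · intro p hp
          simp only [primOddB, Finset.mem_image, Finset.mem_Icc] at hp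
          obtain ⟨j, hj, rfl⟩ := hp
          simp only
          omega
        · intro p hp q hq
          simp only [primOddB, Finset.mem_image, Finset.mem_Icc] at hp hq
          obtain ⟨j, hj, rfl⟩ := hp
          obtain ⟨j', hj', rfl⟩ := hq
          simp only [GoodRel, Nontouch, Nested, Prod.ext_iff]
          omega
  | one =>
    constructor
    · intro p hp; simp only [Finset.mem_singleton] at hp; subst hp; simp
    · intro p hp q hq
      simp only [Finset.mem_singleton] at hp hq
      subst hp; subst hq; exact Or.inl rfl
  | step D i B' hi1 hi2 hB' ih =>
    obtain ⟨ihv, ihr⟩ := ih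
    constructor
    · intro p hp
      rcases mem_tmap.mp hp with ⟨q, hq, rfl⟩ | rfl
      · exact tint_valid i q (ihv q hq).1 (ihv q hq).2
      · exact ⟨hi1, le_refl _⟩
    · intro p hp q hq
      rcases mem_tmap.mp hp with ⟨p', hp', rfl⟩ | rfl <;>
        rcases mem_tmap.mp hq with ⟨q', hq', rfl⟩ | rfl
      · exact tint_rel i p' q' (ihv p' hp').2 (ihv q' hq').2 (ihr p' hp' q' hq')
      · exact goodRel_symm (tint_ii i p' hi1 (ihv p' hp').2)
      · exact tint_ii i q' hi1 (ihv q' hq').2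
      · exact Or.inl rfl

lemma eI_apply (p : ℕ × ℕ) (m : ℕ) :
    (eI p) m = if p.1 ≤ m ∧ m ≤ p.2 then (1 : ZMod 2) else 0 := by
  unfold eI
  rw [Finsupp.finset_sum_apply]
  simp only [e, Finsupp.single_apply]
  rw [Finset.sum_ite_eq' (Finset.Icc p.1 p.2) m (fun _ => (1 : ZMod 2))]
  simp [Finset.mem_Icc]

lemma sum_eI_apply (S : Finset (ℕ × ℕ)) (m : ℕ) :
    (∑ p ∈ S, eI p) m = ∑ p ∈ S, (if p.1 ≤ m ∧ m ≤ p.2 then (1 : ZMod 2) else 0) := by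
  rw [Finsupp.finset_sum_apply]
  exact Finset.sum_congr rfl fun p _ => eI_apply p m

lemma exists_subset_sum {B : Finset (ℕ × ℕ)} {v : Vec} (h : v ∈ EB B) :
    ∃ S ⊆ B, ∑ p ∈ S, eI p = v := by
  rw [EB, Finsupp.mem_span_image_iff_linearCombination] at h
  obtain ⟨l, hl, hlv⟩ := h
  refine ⟨l.support, ?_, ?_⟩
  · intro p hp
    exact hl hp
  · rw [Finsupp.linearCombination_apply, Finsupp.sum] at hlv
    rw [← hlv]
    refine Finset.sum_congr rfl fun p hp => ?_
    have h0 : l p ≠ 0 := Finsupp.mem_support_iff.mp hp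
    have h1 : l p = 1 := by
      have : ∀ x : ZMod 2, x ≠ 0 → x = 1 := by decide
      exact this _ h0
    rw [h1, one_smul]

lemma key_min {S : Finset (ℕ × ℕ)} (hval : ∀ p ∈ S, 1 ≤ p.1 ∧ p.1 ≤ p.2)
    (hrel : ∀ p ∈ S, ∀ q ∈ S, GoodRel p q) (hS : S.Nonempty) :
    ∃ M ∈ S, (∑ p ∈ S, eI p) M.1 = 1 ∧ (∑ p ∈ S, eI p) (M.1 - 1) = 0 ∧
      (∑ p ∈ S, eI p) M.2 = 1 ∧ (∑ p ∈ S, eI p) (M.2 + 1) = 0 := by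
  obtain ⟨M, hM, hMmin⟩ := S.exists_min_image Prod.fst hS
  have hMv := hval M hM
  -- for q ≠ M in S: M.1 < q.1 and (q.2 < M.2 ∨ M.2 + 2 ≤ q.1)
  have hq : ∀ q ∈ S, q ≠ M → M.1 < q.1 ∧ (q.2 < M.2 ∨ M.2 + 2 ≤ q.1) := by
    intro q hqS hne
    have hqv := hval q hqS
    have hrel' := hrel q hqS M hM
    have hle := hMmin q hqS
    rcases hrel' with rfl | h | h | h
    · exact absurd rfl hne
    · unfold Nontouch at h; omega
    · unfold Nested at h; omega
    · unfold Nested at h; omega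
  refine ⟨M, hM, ?_, ?_, ?_, ?_⟩
  · rw [sum_eI_apply]
    rw [Finset.sum_eq_single_of_mem M hM]
    · simp [hMv.2]
    · intro q hqS hne
      have := hq q hqS hne
      rw [if_neg]; omega
  · rw [sum_eI_apply]
    apply Finset.sum_eq_zero
    intro q hqS
    have hle := hMmin q hqS
    rw [if_neg]
    have := hMv.1
    omega
  · rw [sum_eI_apply]
    rw [Finset.sum_eq_single_of_mem M hM]
    · simp [hMv.2]
    · intro q hqS hne
      have := hq q hqS hne
      rw [if_neg]; omega
  · rw [sum_eI_apply]
    apply Finset.sum_eq_zero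
    intro q hqS
    by_cases hne : q = M
    · subst hne; rw [if_neg]; omega
    · have := hq q hqS hne
      rw [if_neg]; omega

/-- if `J ⊆ [1,D]` is an interval with `e_J ∈ 𝔼_B`, then `J ∈ B`. -/
theorem stmt2 (D : ℕ) (B : Finset (ℕ × ℕ)) (hB : IsSS D B)
    (a b : ℕ) (h1 : 1 ≤ a) (h2 : a ≤ b) (h3 : b ≤ D)
    (h : eI (a, b) ∈ EB B) : (a, b) ∈ B := by
  obtain ⟨S, hSB, hsum⟩ := exists_subset_sum h
  obtain ⟨hGv, hGr⟩ := good_of_isSS hB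
  have hval : ∀ p ∈ S, 1 ≤ p.1 ∧ p.1 ≤ p.2 := fun p hp => hGv p (hSB hp)
  have hrel : ∀ p ∈ S, ∀ q ∈ S, GoodRel p q := fun p hp q hq => hGr p (hSB hp) q (hSB hq)
  have hSne : S.Nonempty := by
    by_contra hne
    rw [Finset.not_nonempty_iff_eq_empty] at hne
    subst hne
    simp only [Finset.sum_empty] at hsum
    have := congrArg (fun v : Vec => v a) hsum
    simp only [Finsupp.coe_zero, Pi.zero_apply] at this
    rw [eI_apply] at this
    simp only at this
    rw [if_pos ⟨le_refl a, h2⟩] at this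
    exact one_ne_zero this.symm
  obtain ⟨M, hMS, e1, e2, e3, e4⟩ := key_min hval hrel hSne
  rw [hsum, eI_apply] at e1 e2 e3 e4
  simp only at e1 e2 e3 e4
  have hMv := hval M hMS
  have c1 : a ≤ M.1 ∧ M.1 ≤ b := by
    by_contra hc
    rw [if_neg hc] at e1
    exact one_ne_zero e1.symm
  have c2 : ¬ (a ≤ M.1 - 1 ∧ M.1 - 1 ≤ b) := by
    intro hc
    rw [if_pos hc] at e2
    exact one_ne_zero e2
  have c3 : a ≤ M.2 ∧ M.2 ≤ b := by
    by_contra hc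
    rw [if_neg hc] at e3
    exact one_ne_zero e3.symm
  have c4 : ¬ (a ≤ M.2 + 1 ∧ M.2 + 1 ≤ b) := by
    intro hc
    rw [if_pos hc] at e4
    exact one_ne_zero e4
  have : M = (a, b) := by
    obtain ⟨x, y⟩ := M
    simp only [Prod.mk.injEq]
    simp only at c1 c2 c3 c4 hMv
    omega
  subst this
  exact hSB hMS
end

section
/- Let D be odd. Then |𝒻_*(V_D)| = |𝒻_*(V_{D-1})|, where 𝒻_*(V_D) = {E ∈ 𝒻(V_D) : dim E = (D+1)/2} and 𝒻_*(V_{D-1}) = {E ∈ 𝒻(V_{D-1}) : dim E = (D−1)/2}. -/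
open Finset

section Stmt16Aux

lemma e_apply (i j : ℕ) : e i j = if i = j then 1 else 0 := Finsupp.single_apply

lemma vec_add_self (x : Vec) : x + x = 0 := by
  rw [← two_smul (ZMod 2), show (2:ZMod 2) = 0 from rfl, zero_smul]

lemma Tlin_e (i k : ℕ) : Tlin i (e k) = Tfun i k := by
  simp [Tlin, e, Finsupp.linearCombination_single]

lemma eta_one : eta 1 = e 1 := by
  simp [eta, Finset.filter_singleton]

lemma eta_succ (D : ℕ) (hD : D % 2 = 1) : eta (D + 2) = eta D + e (D + 2) := by
  unfold eta
  rw [show D + 2 = (D+1)+1 from rfl, ← Finset.insert_Icc_right_eq_Icc_add_one (by omega),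
    ← Finset.insert_Icc_right_eq_Icc_add_one (by omega)]
  rw [Finset.filter_insert, Finset.filter_insert]
  rw [if_pos (by omega), if_neg (by omega)]
  rw [Finset.sum_insert (by simp [Finset.mem_Icc])]
  rw [add_comm]

lemma Tlin_eta_id (i D : ℕ) (h : D + 1 < i) : Tlin i (eta D) = eta D := by
  unfold eta
  rw [map_sum]
  apply Finset.sum_congr rfl
  intro j hj
  simp only [Finset.mem_filter, Finset.mem_Icc] at hj
  rw [Tlin_e, Tfun, if_pos (by omega)]

lemma Teta (m : ℕ) : ∀ i, 1 ≤ i → i ≤ 2*m + 3 →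
    Tlin i (eta (2*m+1)) = eta (2*m+3) + e i := by
  induction m with
  | zero =>
    intro i h1 h2
    have e3 : eta 3 = eta 1 + e 3 := eta_succ 1 (by norm_num)
    rw [eta_one] at e3 ⊢
    rw [Tlin_e]
    interval_cases i <;>
      simp only [Tfun, e3, eta_one] <;> norm_num
    · rw [show e 1 + e 3 + e 1 = e 3 + (e 1 + e 1) by abel, vec_add_self, add_zero]
    · abel
    · rw [show e 1 + e 3 + e 3 = e 1 + (e 3 + e 3) by abel, vec_add_self, add_zero]
  | succ m ih =>
    intro i h1 h2
    have key : eta (2*(m+1)+1) = eta (2*m+1) + e (2*m+3) := by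
      rw [show 2*(m+1)+1 = (2*m+1)+2 by ring]
      exact eta_succ _ (by omega)
    have key2 : eta (2*(m+1)+3) = eta (2*m+3) + e (2*m+5) := by
      rw [show 2*(m+1)+3 = (2*m+3)+2 by ring]
      exact eta_succ _ (by omega)
    rw [key, map_add, Tlin_e, key2]
    rcases Nat.lt_or_ge i (2*m+4) with hi | hi
    · rw [ih i h1 (by omega), Tfun, if_neg (by omega), if_neg (by omega)]
      rw [show 2*m+3+2 = 2*m+5 from rfl]
      abel
    rcases Nat.eq_or_lt_of_le hi with hi' | hi'
    · have : i = 2*m+4 := by omega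
      subst this
      rw [Tlin_eta_id _ _ (by omega), Tfun, if_neg (by omega), if_pos (by omega)]
      rw [show eta (2*m+3) = eta (2*m+1) + e (2*m+3) from eta_succ _ (by omega)]
      rw [show 2*m+3+1 = 2*m+4 from rfl, show 2*m+3+2 = 2*m+5 from rfl]
      abel
    · have : i = 2*m+5 := by omega
      subst this
      rw [Tlin_eta_id _ _ (by omega), Tfun, if_pos (by omega)]
      rw [show eta (2*m+3) = eta (2*m+1) + e (2*m+3) from eta_succ _ (by omega)]
      rw [show eta (2*m+1) + e (2*m+3) + e (2*m+5) + e (2*m+5)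
            = eta (2*m+1) + e (2*m+3) + (e (2*m+5) + e (2*m+5)) by abel, vec_add_self, add_zero]

lemma Tfun_apply_zero (i k j : ℕ) (h : k + 2 < j) : Tfun i k j = 0 := by
  unfold Tfun
  split_ifs with h1 h2
  · rw [e_apply, if_neg (by omega)]
  · rw [Finsupp.add_apply, Finsupp.add_apply, e_apply, e_apply, e_apply,
      if_neg (by omega), if_neg (by omega), if_neg (by omega)]
    simp
  · rw [e_apply, if_neg (by omega)]

lemma coords {D : ℕ} {E : Submodule (ZMod 2) Vec} (h : IsF D E) :
    ∀ x ∈ E, ∀ j, D < j → x j = 0 := by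
  induction h with
  | zero D =>
    intro x hx j hj
    rw [(Submodule.mem_bot (ZMod 2)).mp hx]
    rfl
  | one =>
    intro x hx j hj
    obtain ⟨c, rfl⟩ := Submodule.mem_span_singleton.mp hx
    rw [Finsupp.smul_apply, e_apply, if_neg (by omega), smul_zero]
  | step D i E' hi1 hi2 h ih =>
    intro x hx j hj
    obtain ⟨y, hy, z, hz, rfl⟩ := Submodule.mem_sup.mp hx
    obtain ⟨w, hw, rfl⟩ := Submodule.mem_map.mp hy
    obtain ⟨c, rfl⟩ := Submodule.mem_span_singleton.mp hz
    rw [Finsupp.add_apply]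
    have hy0 : (Tlin i w) j = 0 := by
      rw [Tlin, Finsupp.linearCombination_apply, Finsupp.sum_apply]
      apply Finset.sum_eq_zero
      intro k hk
      have hk' : k ≤ D := by
        by_contra hc
        exact (Finsupp.mem_support_iff.mp hk) (ih w hw k (by omega))
      have hterm : (w k • Tfun i k) j = 0 := by
        rw [Finsupp.smul_apply, Tfun_apply_zero i k j (by omega), smul_zero]
      exact hterm
    have hz0 : (c • e i) j = 0 := by
      rw [Finsupp.smul_apply, e_apply, if_neg (by omega), smul_zero]
    rw [hy0, hz0, add_zero]

lemma Tlin_id {i : ℕ} {x : Vec} (h : ∀ k, x k ≠ 0 → k + 1 < i) : Tlin i x = x := by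
  rw [Tlin, Finsupp.linearCombination_apply]
  have hc : x.sum (fun k a => a • Tfun i k) = x.sum (fun k a => Finsupp.single k a) := by
    apply Finsupp.sum_congr
    intro k hk
    rw [Tfun, if_pos (h k (Finsupp.mem_support_iff.mp hk))]
    rw [e, Finsupp.smul_single, smul_eq_mul, mul_one]
  rw [hc, Finsupp.sum_single]

lemma isF_mono {D : ℕ} {E : Submodule (ZMod 2) Vec} (h : IsF D E) : IsF (D+1) E := by
  induction h with
  | zero D => exact IsF.zero _
  | one =>
    have h2 := IsF.step 0 1 ⊥ le_rfl (by omega) (IsF.zero 0)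
    simpa using h2
  | step D i E' h1 h2 h ih => exact IsF.step (D+1) i E' h1 (by omega) ih

lemma isF_fd {D : ℕ} {E : Submodule (ZMod 2) Vec} (h : IsF D E) :
    FiniteDimensional (ZMod 2) E := by
  induction h with
  | zero D => infer_instance
  | one => exact FiniteDimensional.span_of_finite _ (Set.finite_singleton _)
  | step D i E' h1 h2 h ih =>
    haveI := ih
    haveI : FiniteDimensional (ZMod 2) (Submodule.map (Tlin i) E') :=
      Module.Finite.map E' (Tlin i)
    haveI : FiniteDimensional (ZMod 2) (Submodule.span (ZMod 2) {e i}) :=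
      FiniteDimensional.span_of_finite _ (Set.finite_singleton _)
    exact Submodule.finiteDimensional_sup _ _

lemma finrank_sup_le' (s t : Submodule (ZMod 2) Vec) [FiniteDimensional (ZMod 2) s]
    [FiniteDimensional (ZMod 2) t] :
    Module.finrank (ZMod 2) ↥(s ⊔ t) ≤ Module.finrank (ZMod 2) s + Module.finrank (ZMod 2) t := by
  have h := Submodule.finrank_sup_add_finrank_inf_eq s t
  omega

lemma finrank_span_single_le (v : Vec) :
    Module.finrank (ZMod 2) ↥(Submodule.span (ZMod 2) {v}) ≤ 1 := by
  rcases eq_or_ne v 0 with rfl | hv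
  · rw [Submodule.span_zero_singleton]
    simp
  · rw [finrank_span_singleton hv]

lemma finrank_sup_span_le (s : Submodule (ZMod 2) Vec) (v : Vec) [FiniteDimensional (ZMod 2) s] :
    Module.finrank (ZMod 2) ↥(s ⊔ Submodule.span (ZMod 2) {v})
      ≤ Module.finrank (ZMod 2) s + 1 := by
  haveI : FiniteDimensional (ZMod 2) (Submodule.span (ZMod 2) {v}) :=
    FiniteDimensional.span_of_finite _ (Set.finite_singleton _)
  have h := finrank_sup_le' s (Submodule.span (ZMod 2) {v})
  have h2 := finrank_span_single_le v
  omega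

lemma isF_rank_le {D : ℕ} {E : Submodule (ZMod 2) Vec} (h : IsF D E) :
    Module.finrank (ZMod 2) E ≤ (D+1)/2 := by
  induction h with
  | zero D => simp
  | one => exact finrank_span_single_le _
  | step D i E' h1 h2 h ih =>
    haveI := isF_fd h
    haveI : FiniteDimensional (ZMod 2) (Submodule.map (Tlin i) E') :=
      Module.Finite.map E' (Tlin i)
    have hm : Module.finrank (ZMod 2) ↥(Submodule.map (Tlin i) E')
        ≤ Module.finrank (ZMod 2) E' := Submodule.finrank_map_le (Tlin i) E'
    have hs := finrank_sup_span_le (Submodule.map (Tlin i) E') (e i)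
    omega

lemma finrank_sup_span_eq (s : Submodule (ZMod 2) Vec) (v : Vec) [FiniteDimensional (ZMod 2) s]
    (hv : v ∉ s) :
    Module.finrank (ZMod 2) ↥(s ⊔ Submodule.span (ZMod 2) {v})
      = Module.finrank (ZMod 2) s + 1 := by
  haveI : FiniteDimensional (ZMod 2) (Submodule.span (ZMod 2) {v}) :=
    FiniteDimensional.span_of_finite _ (Set.finite_singleton _)
  haveI := Submodule.finiteDimensional_sup s (Submodule.span (ZMod 2) {v})
  refine le_antisymm (finrank_sup_span_le s v) ?_
  have hlt : s < s ⊔ Submodule.span (ZMod 2) {v} := by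
    refine lt_of_le_of_ne le_sup_left (fun hEq => hv ?_)
    rw [hEq]
    exact Submodule.mem_sup_right (Submodule.mem_span_singleton_self v)
  exact Submodule.finrank_lt_finrank_of_lt hlt

lemma span_pair_add (u v : Vec) :
    Submodule.span (ZMod 2) {u + v} ⊔ Submodule.span (ZMod 2) {v}
      = Submodule.span (ZMod 2) {u} ⊔ Submodule.span (ZMod 2) {v} := by
  have h1 : ∀ a b : Vec, Submodule.span (ZMod 2) {a + b} ⊔ Submodule.span (ZMod 2) {b}
      ≤ Submodule.span (ZMod 2) {a} ⊔ Submodule.span (ZMod 2) {b} := by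
    intro a b
    refine sup_le (Submodule.span_le.mpr ?_) le_sup_right
    rintro x rfl
    exact add_mem (Submodule.mem_sup_left (Submodule.mem_span_singleton_self a))
      (Submodule.mem_sup_right (Submodule.mem_span_singleton_self b))
  refine le_antisymm (h1 u v) ?_
  have hu : u = (u + v) + v := by rw [add_assoc, vec_add_self, add_zero]
  calc Submodule.span (ZMod 2) {u} ⊔ Submodule.span (ZMod 2) {v}
      = Submodule.span (ZMod 2) {(u + v) + v} ⊔ Submodule.span (ZMod 2) {v} := by rw [← hu]
    _ ≤ Submodule.span (ZMod 2) {u + v} ⊔ Submodule.span (ZMod 2) {v} := h1 (u + v) v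

lemma map_sup_span (i : ℕ) (A : Submodule (ZMod 2) Vec) (v : Vec) :
    Submodule.map (Tlin i) (A ⊔ Submodule.span (ZMod 2) {v})
      = Submodule.map (Tlin i) A ⊔ Submodule.span (ZMod 2) {Tlin i v} := by
  rw [Submodule.map_sup, Submodule.map_span, Set.image_singleton]

lemma eta_apply_self (D : ℕ) (hD : D % 2 = 1) : eta D D = 1 := by
  rw [eta, Finset.sum_apply']
  rw [Finset.sum_eq_single D]
  · simp [e]
  · intro j hj hne
    simp [e, Finsupp.single_apply, hne]
  · intro hne
    exfalso
    apply hne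
    simp only [Finset.mem_filter, Finset.mem_Icc]
    omega

lemma fwd : ∀ {D : ℕ} {E : Submodule (ZMod 2) Vec}, IsF D E → D % 2 = 0 →
    Module.finrank (ZMod 2) E = D / 2 →
    IsF (D+1) (E ⊔ Submodule.span (ZMod 2) {eta (D+1)}) := by
  intro D E h
  induction h with
  | zero D =>
    intro hpar hrank
    rw [finrank_bot] at hrank
    have hD0 : D = 0 := by omega
    subst hD0
    rw [bot_sup_eq, eta_one]
    exact IsF.one
  | one => intro hpar _; omega
  | step D i E' h1 h2 h ih =>
    intro hpar hrank
    have hD : D % 2 = 0 := by omega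
    haveI := isF_fd h
    haveI : FiniteDimensional (ZMod 2) (Submodule.map (Tlin i) E') :=
      Module.Finite.map E' (Tlin i)
    have hb : Module.finrank (ZMod 2) E' ≤ (D+1)/2 := isF_rank_le h
    have hm : Module.finrank (ZMod 2) ↥(Submodule.map (Tlin i) E')
        ≤ Module.finrank (ZMod 2) E' := Submodule.finrank_map_le (Tlin i) E'
    have hs := finrank_sup_span_le (Submodule.map (Tlin i) E') (e i)
    have hr' : Module.finrank (ZMod 2) E' = D/2 := by omega
    have ih' := ih hD hr'
    have hstep := IsF.step (D+1) i _ h1 (by omega) ih'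
    rw [map_sup_span] at hstep
    have hT : Tlin i (eta (D+1)) = eta (D+3) + e i := by
      have hTT := Teta (D/2) i h1 (by omega)
      rw [show 2*(D/2)+1 = D+1 by omega, show 2*(D/2)+3 = D+3 by omega] at hTT
      exact hTT
    rw [hT] at hstep
    have heq : Submodule.map (Tlin i) E' ⊔ Submodule.span (ZMod 2) {eta (D+3) + e i}
          ⊔ Submodule.span (ZMod 2) {e i}
        = (Submodule.map (Tlin i) E' ⊔ Submodule.span (ZMod 2) {e i})
          ⊔ Submodule.span (ZMod 2) {eta (D+3)} := by
      rw [sup_assoc, span_pair_add, ← sup_assoc, sup_assoc _ (Submodule.span (ZMod 2) {eta (D+3)}),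
        sup_comm (Submodule.span (ZMod 2) {eta (D+3)}) (Submodule.span (ZMod 2) {e i}),
        ← sup_assoc]
    rw [heq] at hstep
    exact hstep

lemma bwd : ∀ {D : ℕ} {E : Submodule (ZMod 2) Vec}, IsF D E → D % 2 = 1 →
    Module.finrank (ZMod 2) E = (D+1) / 2 →
    ∃ E', IsF (D-1) E' ∧ Module.finrank (ZMod 2) E' = (D-1)/2 ∧
      E = E' ⊔ Submodule.span (ZMod 2) {eta D} := by
  intro D E h
  induction h with
  | zero D =>
    intro hpar hrank
    rw [finrank_bot] at hrank
    omega
  | one =>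
    intro hpar hrank
    refine ⟨⊥, IsF.zero 0, by simp, ?_⟩
    rw [eta_one, bot_sup_eq]
  | step D i E' h1 h2 h ih =>
    intro hpar hrank
    have hD : D % 2 = 1 := by omega
    haveI := isF_fd h
    haveI : FiniteDimensional (ZMod 2) (Submodule.map (Tlin i) E') :=
      Module.Finite.map E' (Tlin i)
    have hb : Module.finrank (ZMod 2) E' ≤ (D+1)/2 := isF_rank_le h
    have hm : Module.finrank (ZMod 2) ↥(Submodule.map (Tlin i) E')
        ≤ Module.finrank (ZMod 2) E' := Submodule.finrank_map_le (Tlin i) E'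
    have hs := finrank_sup_span_le (Submodule.map (Tlin i) E') (e i)
    have hr' : Module.finrank (ZMod 2) E' = (D+1)/2 := by omega
    obtain ⟨F', hF1, hF2, hF3⟩ := ih hD hr'
    rcases Nat.lt_or_ge i (D+2) with hi | hige
    · -- case i ≤ D+1
      have hi' : i ≤ D + 1 := by omega
      have hT : Tlin i (eta D) = eta (D+2) + e i := by
        have hTT := Teta ((D-1)/2) i h1 (by omega)
        rw [show 2*((D-1)/2)+1 = D by omega, show 2*((D-1)/2)+3 = D+2 by omega] at hTT
        exact hTT
      refine ⟨Submodule.map (Tlin i) F' ⊔ Submodule.span (ZMod 2) {e i},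
        ?_, ?_, ?_⟩
      · have hstep := IsF.step (D-1) i F' h1 (by omega) hF1
        rw [show D - 1 + 2 = D + 2 - 1 by omega] at hstep
        exact hstep
      · -- rank
        haveI := isF_fd hF1
        haveI : FiniteDimensional (ZMod 2) (Submodule.map (Tlin i) F') :=
          Module.Finite.map F' (Tlin i)
        have hb2 : Module.finrank (ZMod 2) F' ≤ D/2 := by
          have := isF_rank_le hF1
          omega
        have hm2 : Module.finrank (ZMod 2) ↥(Submodule.map (Tlin i) F')
            ≤ Module.finrank (ZMod 2) F' := Submodule.finrank_map_le (Tlin i) F'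
        have hs2 := finrank_sup_span_le (Submodule.map (Tlin i) F') (e i)
        -- lower bound: E = G ⊔ span eta, rank E = (D+3)/2
        have hEeq : Submodule.map (Tlin i) E' ⊔ Submodule.span (ZMod 2) {e i}
            = (Submodule.map (Tlin i) F' ⊔ Submodule.span (ZMod 2) {e i})
              ⊔ Submodule.span (ZMod 2) {eta (D+2)} := by
          rw [hF3, map_sup_span, hT, sup_assoc, span_pair_add, ← sup_assoc,
            sup_assoc _ (Submodule.span (ZMod 2) {eta (D+2)}),
            sup_comm (Submodule.span (ZMod 2) {eta (D+2)}) (Submodule.span (ZMod 2) {e i}),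
            ← sup_assoc]
        haveI : FiniteDimensional (ZMod 2)
            ↥(Submodule.map (Tlin i) F' ⊔ Submodule.span (ZMod 2) {e i}) := by
          haveI : FiniteDimensional (ZMod 2) (Submodule.span (ZMod 2) {e i}) :=
            FiniteDimensional.span_of_finite _ (Set.finite_singleton _)
          exact Submodule.finiteDimensional_sup _ _
        have hlow := finrank_sup_span_le
          (Submodule.map (Tlin i) F' ⊔ Submodule.span (ZMod 2) {e i}) (eta (D+2))
        rw [← hEeq] at hlow
        omega
      · rw [hF3, map_sup_span, hT, sup_assoc, span_pair_add, ← sup_assoc,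
          sup_assoc _ (Submodule.span (ZMod 2) {eta (D+2)}),
          sup_comm (Submodule.span (ZMod 2) {eta (D+2)}) (Submodule.span (ZMod 2) {e i}),
          ← sup_assoc]
    · -- case i = D+2
      have hT : i = D + 2 := by omega
      subst hT
      have hmap : Submodule.map (Tlin (D+2)) E' = E' := by
        ext x
        constructor
        · rintro ⟨y, hy, rfl⟩
          rw [Tlin_id (fun k hk => by
            by_contra hc
            exact hk (coords h y hy k (by omega)))]
          exact hy
        · intro hx
          exact ⟨x, hx, Tlin_id (fun k hk => by
            by_contra hc
            exact hk (coords h x hx k (by omega)))⟩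
      refine ⟨E', ?_, by omega, ?_⟩
      · have := isF_mono h
        rw [show D + 1 = D + 2 - 1 by omega] at this
        exact this
      · rw [hmap, hF3, sup_assoc, sup_assoc]
        congr 1
        rw [eta_succ D hD]
        rw [sup_comm (Submodule.span (ZMod 2) {eta D}) (Submodule.span (ZMod 2) {e (D + 2)}),
          sup_comm (Submodule.span (ZMod 2) {eta D}) (Submodule.span (ZMod 2) {eta D + e (D + 2)}),
          show eta D + e (D + 2) = e (D + 2) + eta D from add_comm _ _]
        exact (span_pair_add (e (D + 2)) (eta D)).symm

lemma sup_eta_inj {v : Vec} {φ : Vec →ₗ[ZMod 2] ZMod 2}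
    (hv : φ v = 1) {s t : Submodule (ZMod 2) Vec}
    (hs : ∀ x ∈ s, φ x = 0) (ht : ∀ x ∈ t, φ x = 0)
    (h : s ⊔ Submodule.span (ZMod 2) {v} = t ⊔ Submodule.span (ZMod 2) {v}) : s = t := by
  have key : ∀ s t : Submodule (ZMod 2) Vec, (∀ x ∈ s, φ x = 0) → (∀ x ∈ t, φ x = 0) →
      s ⊔ Submodule.span (ZMod 2) {v} = t ⊔ Submodule.span (ZMod 2) {v} → s ≤ t := by
    intro s t hs ht h x hx
    have hx' : x ∈ t ⊔ Submodule.span (ZMod 2) {v} := h ▸ Submodule.mem_sup_left hx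
    obtain ⟨y, hy, z, hz, hxe⟩ := Submodule.mem_sup.mp hx'
    obtain ⟨c, rfl⟩ := Submodule.mem_span_singleton.mp hz
    have hc : c = 0 := by
      have h0 := hs x hx
      rw [← hxe, map_add, ht y hy, map_smul, hv, zero_add, smul_eq_mul, mul_one] at h0
      exact h0
    rw [← hxe, hc, zero_smul, add_zero]
    exact hy
  exact le_antisymm (key s t hs ht h) (key t s ht hs h.symm)

end Stmt16Aux

/-- for odd `D`, `|𝒻_*(V_D)| = |𝒻_*(V_{D-1})|`. -/
theorem stmt16 (D : ℕ) (hD : Odd D) :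
    {E : Submodule (ZMod 2) Vec |
        IsF D E ∧ Module.finrank (ZMod 2) E = (D + 1) / 2}.ncard
      = {E : Submodule (ZMod 2) Vec |
          IsF (D - 1) E ∧ Module.finrank (ZMod 2) E = (D - 1) / 2}.ncard := by
  obtain ⟨m, rfl⟩ := hD
  have harith : 2*m+1-1 = 2*m := by omega
  simp only [harith]
  set φ : Vec →ₗ[ZMod 2] ZMod 2 := Finsupp.lapply (2*m+1) with hφ
  have hker : ∀ {E : Submodule (ZMod 2) Vec}, IsF (2*m) E → ∀ x ∈ E, φ x = 0 := by
    intro E hE x hx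
    rw [hφ, Finsupp.lapply_apply]
    exact coords hE x hx (2*m+1) (by omega)
  have hφη : φ (eta (2*m+1)) = 1 := by
    rw [hφ, Finsupp.lapply_apply]
    exact eta_apply_self (2*m+1) (by omega)
  have himg : {E : Submodule (ZMod 2) Vec |
        IsF (2*m+1) E ∧ Module.finrank (ZMod 2) E = (2*m+1+1)/2}
      = (fun E' => E' ⊔ Submodule.span (ZMod 2) {eta (2*m+1)}) ''
        {E : Submodule (ZMod 2) Vec |
          IsF (2*m) E ∧ Module.finrank (ZMod 2) E = (2*m)/2} := by
    ext E
    simp only [Set.mem_setOf_eq, Set.mem_image]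
    constructor
    · rintro ⟨hE, hr⟩
      obtain ⟨E', h1, h2, h3⟩ := bwd hE (by omega) hr
      simp only [harith] at h1 h2
      exact ⟨E', ⟨h1, h2⟩, h3.symm⟩
    · rintro ⟨E', ⟨h1, h2⟩, rfl⟩
      haveI := isF_fd h1
      have hnm : eta (2*m+1) ∉ E' := by
        intro hmem
        have := hker h1 _ hmem
        rw [hφη] at this
        exact absurd this (by decide)
      refine ⟨fwd h1 (by omega) h2, ?_⟩
      rw [finrank_sup_span_eq E' (eta (2*m+1)) hnm, h2]
      omega
  rw [himg]
  apply Set.ncard_image_of_injOn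
  intro E1 hE1 E2 hE2 heq
  exact sup_eta_inj hφη (hker hE1.1) (hker hE2.1) heq
end
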